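/- Let V be a pseudovariety of semigroups closed under two-sided Karnofsky–Rhodes expansion. Then every V-projective semigroup is a KR-cover. -/

import Mathlib

set_option autoImplicit false

/-! ### General notions: topological semigroups, pseudovarieties, pro-V semigroups -/

/-- Continuity of a map into a type regarded with the discrete topology. -/
def ContinuousDisc {S : Type} [TopologicalSpace S] {T : Type} (f : S → T) : Prop :=
  @Continuous S T _ ⊥ f

/-- A pseudovariety of semigroups: a class of finite semigroups closed under
homomorphic images, subsemigroups and finite direct products. -/
structure Pseudovariety : Type 1 where
  Mem : ∀ (S : Type) [Semigroup S], Prop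
  finite : ∀ (S : Type) [Semigroup S], Mem S → Finite S
  closed_hom : ∀ (S T : Type) [Semigroup S] [Semigroup T] (f : S →ₙ* T),
    Mem S → Function.Surjective f → Mem T
  closed_sub : ∀ (S T : Type) [Semigroup S] [Semigroup T] (f : T →ₙ* S),
    Mem S → Function.Injective f → Mem T
  closed_prod : ∀ (ι : Type) [Finite ι] (S : ι → Type) [∀ i, Semigroup (S i)],
    (∀ i, Mem (S i)) → Mem (∀ i, S i)

/-- A bundled member of a pseudovariety `V` (a finite semigroup belonging to `V`),
always regarded as carrying the discrete topology. -/
structure SgrIn (V : Pseudovariety) : Type 1 where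
  carrier : Type
  [str : Semigroup carrier]
  mem : V.Mem carrier

attribute [instance] SgrIn.str

/-- A (bundled) topological semigroup. -/
structure TopSgr : Type 1 where
  carrier : Type
  [str : Semigroup carrier]
  [top : TopologicalSpace carrier]

attribute [instance] TopSgr.str TopSgr.top

/-- A finite semigroup regarded as a topological semigroup with the discrete topology. -/
def discTopSgr (S : Type) [Semigroup S] : TopSgr :=
  @TopSgr.mk S _ ⊥

/-- A pro-V semigroup: a compact Hausdorff topological semigroup that is residually `V`. -/
def IsProV (V : Pseudovariety) (S : TopSgr) : Prop :=
  CompactSpace S.carrier ∧ T2Space S.carrier ∧ ContinuousMul S.carrier ∧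
    ∀ x y : S.carrier, x ≠ y → ∃ (F : SgrIn V) (f : S.carrier →ₙ* F.carrier),
      ContinuousDisc ⇑f ∧ f x ≠ f y

/-- A profinite semigroup: a compact Hausdorff totally disconnected topological semigroup. -/
def IsProfiniteSgr (S : TopSgr) : Prop :=
  CompactSpace S.carrier ∧ T2Space S.carrier ∧ TotallyDisconnectedSpace S.carrier ∧
    ContinuousMul S.carrier

/-- `C`, together with the continuous homomorphisms `φ i`, is a `V`-coproduct of the
family `S` of pro-`V` semigroups. -/
structure IsCoproduct (V : Pseudovariety) {I : Type} (S : I → TopSgr)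
    (C : TopSgr) (φ : ∀ i, (S i).carrier →ₙ* C.carrier) : Prop where
  proV : IsProV V C
  cont : ∀ i, Continuous ⇑(φ i)
  universal : ∀ (T : TopSgr), IsProV V T →
    ∀ ψ : ∀ i, (S i).carrier →ₙ* T.carrier, (∀ i, Continuous ⇑(ψ i)) →
      ∃! Ψ : C.carrier →ₙ* T.carrier, Continuous ⇑Ψ ∧ ∀ i, Ψ.comp (φ i) = ψ i

/-- `P`, together with the homomorphisms `e i`, is a free product (coproduct in the
category of semigroups) of the family `S`. -/
structure IsFreeProduct {I : Type} (S : I → Type) [∀ i, Semigroup (S i)]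
    (P : Type) [Semigroup P] (e : ∀ i, S i →ₙ* P) : Prop where
  universal : ∀ (T : Type) [Semigroup T] (f : ∀ i, S i →ₙ* T),
    ∃! F : P →ₙ* T, ∀ i, F.comp (e i) = f i

/-! ### Particular pseudovarieties and related notions -/

/-- `V` contains the pseudovariety `Sl` of finite semilattices. -/
def ContainsSl (V : Pseudovariety) : Prop :=
  ∀ (S : Type) [Semigroup S] [Finite S],
    (∀ x y : S, x * y = y * x) → (∀ x : S, x * x = x) → V.Mem S

/-- Green's `J`-preorder: `s ≤_J t`, i.e. `s ∈ S^I t S^I`. -/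
def JBelow {S : Type} [Semigroup S] (s t : S) : Prop :=
  ∃ x y : WithOne S, x * (t : WithOne S) * y = (s : WithOne S)

/-- `V` contains the pseudovariety `J` of finite `J`-trivial semigroups. -/
def ContainsJ (V : Pseudovariety) : Prop :=
  ∀ (S : Type) [Semigroup S] [Finite S],
    (∀ s t : S, JBelow s t → JBelow t s → s = t) → V.Mem S

/-- The preimage of an idempotent under a semigroup homomorphism, as a subsemigroup. -/
def fiberSub {S T : Type} [Semigroup S] [Semigroup T] (ψ : S →ₙ* T) (e : T)
    (he : e * e = e) : Subsemigroup S where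
  carrier := ⇑ψ ⁻¹' {e}
  mul_mem' := by
    intro a b ha hb
    simp only [Set.mem_preimage, Set.mem_singleton_iff] at *
    rw [map_mul, ha, hb, he]

/-- The set of products of `n+1` elements of a semigroup (so `nthProds S 0 = S`). -/
def nthProds (S : Type) [Semigroup S] : ℕ → Set S
  | 0 => Set.univ
  | n + 1 => {x | ∃ a y, y ∈ nthProds S n ∧ x = a * y}

/-- A nilpotent semigroup: it has a zero `z` and some power of the semigroup is `{z}`. -/
def IsNilpotentSgr (S : Type) [Semigroup S] : Prop :=
  ∃ z : S, (∀ x : S, z * x = z ∧ x * z = z) ∧ ∃ n : ℕ, nthProds S n ⊆ {z}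

/-- A generator of the Mal'cev product `N ⓜ V`: a finite semigroup admitting a surjective
homomorphism onto a member of `V` all of whose idempotent fibers are nilpotent. -/
def NMalcevGen (V : Pseudovariety) (S : Type) [Semigroup S] : Prop :=
  Finite S ∧ ∃ (T : SgrIn V) (ψ : S →ₙ* T.carrier), Function.Surjective ψ ∧
    ∀ (e : T.carrier) (he : e * e = e), IsNilpotentSgr (fiberSub ψ e he)

/-- The equality `N ⓜ V = V`: `V` coincides with the smallest pseudovariety containing
all finite semigroups admitting an `N`-morphism onto some member of `V`. -/
def NMalcevFixed (V : Pseudovariety) : Prop :=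
  ∀ (S : Type) [Semigroup S] [Finite S],
    V.Mem S ↔ ∀ U : Pseudovariety,
      (∀ (S' : Type) [Semigroup S'], NMalcevGen V S' → U.Mem S') → U.Mem S

/-- A completely simple semigroup: simple with a primitive idempotent. -/
def IsCompletelySimple (S : Type) [Semigroup S] : Prop :=
  (∀ J : Set S, J.Nonempty → (∀ s x : S, x ∈ J → s * x ∈ J ∧ x * s ∈ J) → J = Set.univ) ∧
  ∃ e : S, e * e = e ∧ ∀ f : S, f * f = f → e * f = f → f * e = f → f = e

/-- An equidivisible semigroup. -/
def Equidivisible (S : Type) [Semigroup S] : Prop :=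
  ∀ u v x y : S, u * v = x * y →
    ∃ t : WithOne S,
      ((x : WithOne S) = (u : WithOne S) * t ∧ t * (y : WithOne S) = (v : WithOne S)) ∨
      ((x : WithOne S) * t = (u : WithOne S) ∧ (y : WithOne S) = t * (v : WithOne S))

/-! ### The two-sided Karnofsky–Rhodes expansion -/

/-- Vertices of the two-sided Cayley graph of `T`: pairs of elements of `T^I`. -/
abbrev KRVtx (T : Type) : Type := WithOne T × WithOne T

/-- Edges of the two-sided Cayley graph: (source, label, target). -/
abbrev KREdge (A T : Type) : Type := KRVtx T × A × KRVtx T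

/-- The image in `T^I` of a letter. -/
def letterImg {A T : Type} [Semigroup T] (ψ : FreeSemigroup A →ₙ* T) (a : A) : WithOne T :=
  (ψ (FreeSemigroup.of a) : WithOne T)

/-- The image in `T^I` of a (possibly empty) word. -/
def wordImg {A T : Type} [Semigroup T] (ψ : FreeSemigroup A →ₙ* T) (w : List A) : WithOne T :=
  (w.map (letterImg ψ)).prod

/-- `e` is an edge of the two-sided Cayley graph `Γ_ψ`. -/
def IsKREdge {A T : Type} [Semigroup T] (ψ : FreeSemigroup A →ₙ* T) (e : KREdge A T) : Prop :=
  e.1.1 * letterImg ψ e.2.1 = e.2.2.1 ∧ e.1.2 = letterImg ψ e.2.1 * e.2.2.2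

/-- One step along an edge of `Γ_ψ` (used to define directed paths). -/
def KRStep {A T : Type} [Semigroup T] (ψ : FreeSemigroup A →ₙ* T) (v w : KRVtx T) : Prop :=
  ∃ a : A, v.1 * letterImg ψ a = w.1 ∧ v.2 = letterImg ψ a * w.2

/-- A transition edge of `Γ_ψ`: an edge from whose target there is no directed path
back to its source. -/
def IsTransEdge {A T : Type} [Semigroup T] (ψ : FreeSemigroup A →ₙ* T) (e : KREdge A T) : Prop :=
  IsKREdge ψ e ∧ ¬ Relation.ReflTransGen (KRStep ψ) e.2.2 e.1

/-- The list of letters of an element of the free semigroup. -/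
def letters {A : Type} (u : FreeSemigroup A) : List A := u.head :: u.tail

/-- The set of edges of the path `p_u` of `Γ_ψ` from `(I, ψ u)` to `(ψ u, I)` labeled by `u`. -/
def pathEdges {A T : Type} [Semigroup T] (ψ : FreeSemigroup A →ₙ* T) (u : FreeSemigroup A) :
    Set (KREdge A T) :=
  {e | ∃ (w₁ w₂ : List A) (a : A), letters u = w₁ ++ a :: w₂ ∧
    e = ((wordImg ψ w₁, wordImg ψ (a :: w₂)), a, (wordImg ψ (w₁ ++ [a]), wordImg ψ w₂))}

/-- The set `T(p_u)` of transition edges of `Γ_ψ` occurring in the path `p_u`. -/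
def transEdges {A T : Type} [Semigroup T] (ψ : FreeSemigroup A →ₙ* T) (u : FreeSemigroup A) :
    Set (KREdge A T) :=
  {e ∈ pathEdges ψ u | IsTransEdge ψ e}

/-- A realization of the two-sided Karnofsky–Rhodes expansion of `ψ : A⁺ → T`:
a semigroup `K = T_ψ^KR` together with the projection `ψ^KR : A⁺ → K`, which is onto and
identifies `u` and `v` exactly when `ψ u = ψ v` and `T(p_u) = T(p_v)`, and the canonical
homomorphism `π : T_ψ^KR → T` with `π ∘ ψ^KR = ψ`. -/
structure KRExp {A T : Type} [Semigroup T] (ψ : FreeSemigroup A →ₙ* T) : Type 1 where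
  K : Type
  [strK : Semigroup K]
  [finK : Finite K]
  ψKR : FreeSemigroup A →ₙ* K
  π : K →ₙ* T
  surj : Function.Surjective ⇑ψKR
  ker : ∀ u v : FreeSemigroup A, ψKR u = ψKR v ↔
    (ψ u = ψ v ∧ transEdges ψ u = transEdges ψ v)
  proj : π.comp ψKR = ψ

attribute [instance] KRExp.strK KRExp.finK

/-- The data of a two-sided Karnofsky–Rhodes expansion of a finite semigroup `T`:
a finite alphabet `A`, an onto homomorphism `ψ : A⁺ → T`, and a realization `T_ψ^KR`. -/
structure KRData (T : Type) [Semigroup T] : Type 1 where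
  A : Type
  [finA : Finite A]
  ψ : FreeSemigroup A →ₙ* T
  surjψ : Function.Surjective ⇑ψ
  E : KRExp ψ

attribute [instance] KRData.finA

/-- `V` is closed under two-sided Karnofsky–Rhodes expansion. -/
def ClosedUnderKR (V : Pseudovariety) : Prop :=
  ∀ (A T : Type) [Finite A] [Semigroup T], V.Mem T →
    ∀ (ψ : FreeSemigroup A →ₙ* T), Function.Surjective ⇑ψ →
      ∀ E : KRExp ψ, V.Mem E.K

/-! ### KR-covers -/

/-- `S` is a KR-cover of the finite semigroup `T`. -/
def IsKRCoverOf (S : TopSgr) (T : Type) [Semigroup T] [Finite T] : Prop :=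
  (∃ φ : S.carrier →ₙ* T, ContinuousDisc ⇑φ ∧ Function.Surjective ⇑φ) ∧
  ∀ φ : S.carrier →ₙ* T, ContinuousDisc ⇑φ → Function.Surjective ⇑φ →
    ∃ (D : KRData T) (φψ : S.carrier →ₙ* D.E.K),
      ContinuousDisc ⇑φψ ∧ D.E.π.comp φψ = φ

/-- `S` is a KR-cover: a KR-cover of each of its finite continuous homomorphic images. -/
def IsKRCover (S : TopSgr) : Prop :=
  ∀ (T : Type) [Semigroup T] [Finite T],
    (∃ φ : S.carrier →ₙ* T, ContinuousDisc ⇑φ ∧ Function.Surjective ⇑φ) →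
    IsKRCoverOf S T

/-- `S` is `V`-projective. -/
def IsVProjective (V : Pseudovariety) (S : TopSgr) : Prop :=
  IsProV V S ∧ ∀ (T R : TopSgr), IsProV V T → IsProV V R →
    ∀ (f : S.carrier →ₙ* T.carrier) (g : R.carrier →ₙ* T.carrier),
      Continuous ⇑f → Continuous ⇑g → Function.Surjective ⇑g →
        ∃ f' : S.carrier →ₙ* R.carrier, Continuous ⇑f' ∧ g.comp f' = f

/-! ### Strong KR-covers and letter super-cancellativity -/

/-- `κ : A → S` is a generating mapping: its image generates a dense subsemigroup. -/
def GeneratingMap {A : Type} (S : TopSgr) (κ : A → S.carrier) : Prop :=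
  Dense (Subsemigroup.closure (Set.range κ) : Set S.carrier)

/-- The homomorphism `A⁺ → T` extending `a ↦ φ (κ a)`. -/
def liftGen {A : Type} (S : TopSgr) (κ : A → S.carrier) {T : Type} [Semigroup T]
    (φ : S.carrier →ₙ* T) : FreeSemigroup A →ₙ* T :=
  FreeSemigroup.lift (fun a => φ (κ a))

/-- `S` is a strong KR-cover of the finite semigroup `T` with respect to the
generating mapping `κ`. -/
def IsStrongKRCoverOfWrt {A : Type} (S : TopSgr) (κ : A → S.carrier)
    (T : Type) [Semigroup T] [Finite T] : Prop :=
  ∀ φ : S.carrier →ₙ* T, ContinuousDisc ⇑φ → Function.Surjective ⇑φ →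
    ∃ (E : KRExp (liftGen S κ φ)) (φκ : S.carrier →ₙ* E.K),
      ContinuousDisc ⇑φκ ∧ E.π.comp φκ = φ ∧
      ∀ a : A, φκ (κ a) = E.ψKR (FreeSemigroup.of a)

/-- `S` is a strong KR-cover of the finite semigroup `T` (with respect to some
generating mapping with finite domain). -/
def IsStrongKRCoverOf (S : TopSgr) (T : Type) [Semigroup T] [Finite T] : Prop :=
  ∃ A : Type, Finite A ∧ ∃ κ : A → S.carrier, GeneratingMap S κ ∧
    IsStrongKRCoverOfWrt S κ T

/-- `S` is a strong KR-cover: a strong KR-cover of each of its finite continuous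
homomorphic images. -/
def IsStrongKRCover (S : TopSgr) : Prop :=
  ∀ (T : Type) [Semigroup T] [Finite T],
    (∃ φ : S.carrier →ₙ* T, ContinuousDisc ⇑φ ∧ Function.Surjective ⇑φ) →
    IsStrongKRCoverOf S T

/-- `S` is letter super-cancellative with respect to the subset `A` of `S`. -/
def IsLSC (S : TopSgr) (A : Set S.carrier) : Prop :=
  ∀ a ∈ A, ∀ b ∈ A, ∀ u v : WithOne S.carrier,
    (u * (a : WithOne S.carrier) = v * (b : WithOne S.carrier) → a = b ∧ u = v) ∧
    ((a : WithOne S.carrier) * u = (b : WithOne S.carrier) * v → a = b ∧ u = v)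

/-! ### `S^I` and inverse limits -/

/-- The sum topology on `S^I = S ∪ {I}`: the point `I` is isolated and `S` keeps
its topology. -/
def withOneTopology (S : Type) [TopologicalSpace S] : TopologicalSpace (WithOne S) where
  IsOpen V := IsOpen ((fun s : S => (s : WithOne S)) ⁻¹' V)
  isOpen_univ := by simp
  isOpen_inter := by
    intro U V hU hV
    rw [Set.preimage_inter]
    exact hU.inter hV
  isOpen_sUnion := by
    intro s hs
    rw [Set.preimage_sUnion]
    exact isOpen_biUnion hs

/-- `S^I` as a topological semigroup (in fact a monoid): `S` with an isolated identity
adjoined. -/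
def withOneTopSgr (S : TopSgr) : TopSgr :=
  @TopSgr.mk (WithOne S.carrier) _ (withOneTopology S.carrier)

/-- The inverse limit of a family of topological semigroups, as a subsemigroup of
the product. -/
def invLimSub {I : Type} [Preorder I] (S : I → TopSgr)
    (f : ∀ i j, j ≤ i → ((S i).carrier →ₙ* (S j).carrier)) :
    Subsemigroup (∀ i, (S i).carrier) where
  carrier := {x | ∀ i j (h : j ≤ i), f i j h (x i) = x j}
  mul_mem' := by
    intro a b ha hb i j h
    simp only [Pi.mul_apply, map_mul, ha i j h, hb i j h]

/-- The inverse limit as a topological semigroup (with the topology induced from the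
product topology). -/
def invLimTopSgr {I : Type} [Preorder I] (S : I → TopSgr)
    (f : ∀ i j, j ≤ i → ((S i).carrier →ₙ* (S j).carrier)) : TopSgr :=
  TopSgr.mk (invLimSub S f)
section KRConstruction

open Relation

variable {A T : Type} [Semigroup T] (ψ : FreeSemigroup A →ₙ* T)

/-- Right translation of an edge of the two-sided Cayley graph. -/
def rmulE (W : WithOne T) (e : KREdge A T) : KREdge A T :=
  ((e.1.1, e.1.2 * W), e.2.1, (e.2.2.1, e.2.2.2 * W))

/-- Left translation of an edge of the two-sided Cayley graph. -/
def lmulE (U : WithOne T) (e : KREdge A T) : KREdge A T :=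
  ((U * e.1.1, e.1.2), e.2.1, (U * e.2.2.1, e.2.2.2))

lemma letters_mul (u v : FreeSemigroup A) : letters (u * v) = letters u ++ letters v := rfl

lemma wordImg_append (l₁ l₂ : List A) :
    wordImg ψ (l₁ ++ l₂) = wordImg ψ l₁ * wordImg ψ l₂ := by
  simp [wordImg]

lemma wordImg_nil : wordImg ψ ([] : List A) = 1 := rfl

lemma wordImg_cons (a : A) (l : List A) :
    wordImg ψ (a :: l) = letterImg ψ a * wordImg ψ l := by
  simp [wordImg]

lemma wordImg_letters (u : FreeSemigroup A) :
    wordImg ψ (letters u) = ((ψ u : T) : WithOne T) := by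
  refine FreeSemigroup.recOnMul u (fun a => ?_) (fun a y iha ihy => ?_)
  · show wordImg ψ [a] = _
    simp [wordImg, letterImg]
  · rw [letters_mul, wordImg_append, iha, ihy, map_mul, WithOne.coe_mul]

lemma pathEdges_mul (u v : FreeSemigroup A) :
    pathEdges ψ (u * v) =
      rmulE ((ψ v : T) : WithOne T) '' pathEdges ψ u ∪
      lmulE ((ψ u : T) : WithOne T) '' pathEdges ψ v := by
  ext e
  simp only [pathEdges, Set.mem_setOf_eq, Set.mem_union, Set.mem_image]
  constructor
  · rintro ⟨w₁, w₂, a, hd, rfl⟩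
    rw [letters_mul] at hd
    rcases List.append_eq_append_iff.mp hd.symm with ⟨c, hu, hc⟩ | ⟨c, hw₁, hv⟩
    · cases c with
      | nil =>
        rw [List.append_nil] at hu
        rw [List.nil_append] at hc
        refine Or.inr ⟨((wordImg ψ ([] : List A), wordImg ψ (a :: w₂)), a,
          (wordImg ψ ([] ++ [a]), wordImg ψ w₂)), ⟨[], w₂, a, hc.symm, rfl⟩, ?_⟩
        subst hu
        simp [lmulE, wordImg_nil, wordImg_append, wordImg_letters]
      | cons a₀ c' =>
        injection hc with h1 h2
        subst h1
        subst h2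
        refine Or.inl ⟨((wordImg ψ w₁, wordImg ψ (a :: c')), a,
          (wordImg ψ (w₁ ++ [a]), wordImg ψ c')), ⟨w₁, c', a, hu, rfl⟩, ?_⟩
        simp [rmulE, wordImg_append, wordImg_letters, wordImg_cons, mul_assoc]
    · refine Or.inr ⟨((wordImg ψ c, wordImg ψ (a :: w₂)), a,
        (wordImg ψ (c ++ [a]), wordImg ψ w₂)), ⟨c, w₂, a, hv, rfl⟩, ?_⟩
      subst hw₁
      simp [lmulE, wordImg_append, wordImg_letters, mul_assoc]
  · rintro (⟨e', ⟨w₁, w₂, a, hd, rfl⟩, rfl⟩ | ⟨e', ⟨w₁, w₂, a, hd, rfl⟩, rfl⟩)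
    · refine ⟨w₁, w₂ ++ letters v, a, ?_, ?_⟩
      · rw [letters_mul, hd]; simp
      · simp [rmulE, wordImg_append, wordImg_letters, wordImg_cons, mul_assoc]
    · refine ⟨letters u ++ w₁, w₂, a, ?_, ?_⟩
      · rw [letters_mul, hd, List.append_assoc]
      · simp [lmulE, wordImg_append, wordImg_letters, mul_assoc]

lemma krStep_rmul (W : WithOne T) {x y : KRVtx T} (h : KRStep ψ x y) :
    KRStep ψ (x.1, x.2 * W) (y.1, y.2 * W) := by
  obtain ⟨c, h1, h2⟩ := h
  exact ⟨c, h1, by rw [h2, mul_assoc]⟩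

lemma krStep_lmul (U : WithOne T) {x y : KRVtx T} (h : KRStep ψ x y) :
    KRStep ψ (U * x.1, x.2) (U * y.1, y.2) := by
  obtain ⟨c, h1, h2⟩ := h
  exact ⟨c, by rw [mul_assoc, h1], h2⟩

lemma isTransEdge_of_rmulE (W : WithOne T) {e : KREdge A T} (he : IsKREdge ψ e)
    (h : IsTransEdge ψ (rmulE W e)) : IsTransEdge ψ e := by
  refine ⟨he, fun hp => h.2 ?_⟩
  exact ReflTransGen.lift (fun p : KRVtx T => (p.1, p.2 * W)) (fun a b hs => krStep_rmul ψ W hs) _ _ hp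

lemma isTransEdge_of_lmulE (U : WithOne T) {e : KREdge A T} (he : IsKREdge ψ e)
    (h : IsTransEdge ψ (lmulE U e)) : IsTransEdge ψ e := by
  refine ⟨he, fun hp => h.2 ?_⟩
  exact ReflTransGen.lift (fun p : KRVtx T => (U * p.1, p.2)) (fun a b hs => krStep_lmul ψ U hs) _ _ hp

lemma isKREdge_of_mem_pathEdges {u : FreeSemigroup A} {e : KREdge A T}
    (h : e ∈ pathEdges ψ u) : IsKREdge ψ e := by
  obtain ⟨w₁, w₂, a, _, rfl⟩ := h
  exact ⟨by simp [wordImg_append, wordImg], by simp [wordImg]⟩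

lemma transEdges_mul (u v : FreeSemigroup A) :
    transEdges ψ (u * v) =
      {f | f ∈ rmulE ((ψ v : T) : WithOne T) '' transEdges ψ u ∧ IsTransEdge ψ f} ∪
      {f | f ∈ lmulE ((ψ u : T) : WithOne T) '' transEdges ψ v ∧ IsTransEdge ψ f} := by
  ext f
  simp only [transEdges, Set.mem_setOf_eq, Set.mem_union, Set.mem_image, pathEdges_mul]
  constructor
  · rintro ⟨⟨e, he, rfl⟩ | ⟨e, he, rfl⟩, ht⟩
    · exact Or.inl ⟨⟨e, ⟨he, isTransEdge_of_rmulE ψ _ (isKREdge_of_mem_pathEdges ψ he) ht⟩,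
        rfl⟩, ht⟩
    · exact Or.inr ⟨⟨e, ⟨he, isTransEdge_of_lmulE ψ _ (isKREdge_of_mem_pathEdges ψ he) ht⟩,
        rfl⟩, ht⟩
  · rintro (⟨⟨e, ⟨he, _⟩, rfl⟩, ht⟩ | ⟨⟨e, ⟨he, _⟩, rfl⟩, ht⟩)
    · exact ⟨Or.inl ⟨e, he, rfl⟩, ht⟩
    · exact ⟨Or.inr ⟨e, he, rfl⟩, ht⟩

lemma transEdges_mul_congr {u v u' v' : FreeSemigroup A}
    (h1 : ψ u = ψ v) (h2 : transEdges ψ u = transEdges ψ v)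
    (h1' : ψ u' = ψ v') (h2' : transEdges ψ u' = transEdges ψ v') :
    transEdges ψ (u * u') = transEdges ψ (v * v') := by
  rw [transEdges_mul, transEdges_mul, h1, h2, h1', h2']

/-- The KR congruence on the free semigroup. -/
def krCon : Con (FreeSemigroup A) where
  r u v := ψ u = ψ v ∧ transEdges ψ u = transEdges ψ v
  iseqv := ⟨fun _ => ⟨rfl, rfl⟩, fun h => ⟨h.1.symm, h.2.symm⟩,
    fun h h' => ⟨h.1.trans h'.1, h.2.trans h'.2⟩⟩
  mul' := fun h h' => ⟨by rw [map_mul, map_mul, h.1, h'.1],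
    transEdges_mul_congr ψ h.1 h.2 h'.1 h'.2⟩

/-- A realization of the two-sided Karnofsky–Rhodes expansion. -/
def krExp [Finite A] [Finite T] : KRExp ψ where
  K := (krCon ψ).Quotient
  strK := inferInstance
  finK := by
    cases nonempty_fintype T
    haveI : Finite (WithOne T) := inferInstanceAs (Finite (Option T))
    let g : (krCon ψ).Quotient → T × Set (KREdge A T) :=
      Quotient.lift (fun u => (ψ u, transEdges ψ u))
        (fun a b h => by
          obtain ⟨h1, h2⟩ := h
          rw [Prod.mk.injEq]
          exact ⟨h1, h2⟩)
    have hg : Function.Injective g := by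
      intro x y
      refine Quotient.inductionOn₂ x y (fun u v h => ?_)
      exact (Con.eq _).mpr ⟨congrArg Prod.fst h, congrArg Prod.snd h⟩
    exact Finite.of_injective g hg
  ψKR := { toFun := fun u => (u : (krCon ψ).Quotient),
           map_mul' := fun u v => Con.coe_mul u v }
  π := { toFun := Quotient.lift (⇑ψ) (fun a b h => h.1),
         map_mul' := fun x y => Quotient.inductionOn₂ x y (fun u v => map_mul ψ u v) }
  surj := fun x => Quotient.inductionOn x fun u => ⟨u, rfl⟩
  ker := fun u v => Con.eq _
  proj := MulHom.ext fun u => rfl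

end KRConstruction

section ProV

/-- A finite member of `V` with the discrete topology is pro-`V`. -/
lemma isProV_disc (V : Pseudovariety) (T : Type) [Semigroup T] [Finite T] (h : V.Mem T) :
    IsProV V (discTopSgr T) := by
  haveI : DiscreteTopology ((discTopSgr T).carrier) := ⟨rfl⟩
  haveI : Finite ((discTopSgr T).carrier) := ‹Finite T›
  refine ⟨Finite.compactSpace, inferInstance, ⟨continuous_of_discreteTopology⟩, ?_⟩
  intro x y hxy
  exact ⟨⟨T, h⟩, MulHom.id T, continuous_bot, hxy⟩

/-- A finite continuous homomorphic image of a pro-`V` semigroup lies in `V`. -/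
lemma mem_of_finite_image (V : Pseudovariety) (S : TopSgr) (hS : IsProV V S)
    (T : Type) [Semigroup T] [Finite T] (φ : S.carrier →ₙ* T)
    (hc : ContinuousDisc ⇑φ) (hs : Function.Surjective ⇑φ) : V.Mem T := by
  classical
  obtain ⟨hcomp, ht2, hmul, hres⟩ := hS
  letI : TopologicalSpace T := ⊥
  haveI : DiscreteTopology T := ⟨rfl⟩
  set X := S.carrier
  set K : Set (X × X) := {p | φ p.1 ≠ φ p.2} with hKdef
  have hKc : IsCompact K := by
    have hcont : Continuous fun p : X × X => (φ p.1, φ p.2) :=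
      (hc.comp continuous_fst).prodMk (hc.comp continuous_snd)
    exact ((isClosed_discrete {q : T × T | q.1 ≠ q.2}).preimage hcont).isCompact
  have hsep : ∀ p : K, ∃ F : SgrIn V, ∃ f : X →ₙ* F.carrier,
      ContinuousDisc ⇑f ∧ f p.1.1 ≠ f p.1.2 := by
    rintro ⟨⟨x, y⟩, hp⟩
    have hxy : x ≠ y := fun hh => hp (by simp [hKdef, hh] at hp ⊢)
    obtain ⟨F, f, hf1, hf2⟩ := hres x y hxy
    exact ⟨F, f, hf1, hf2⟩
  choose F f hfc hfne using hsep
  have hUopen : ∀ p : K, IsOpen {q : X × X | f p q.1 ≠ f p q.2} := by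
    intro p
    letI : TopologicalSpace (F p).carrier := ⊥
    haveI : DiscreteTopology (F p).carrier := ⟨rfl⟩
    have hcont : Continuous fun q : X × X => (f p q.1, f p q.2) :=
      ((hfc p).comp continuous_fst).prodMk ((hfc p).comp continuous_snd)
    exact (isOpen_discrete {q : (F p).carrier × (F p).carrier | q.1 ≠ q.2}).preimage hcont
  have hcover : K ⊆ ⋃ p : K, {q : X × X | f p q.1 ≠ f p q.2} := by
    intro q hq
    exact Set.mem_iUnion.mpr ⟨⟨q, hq⟩, hfne ⟨q, hq⟩⟩
  obtain ⟨s, hs'⟩ := hKc.elim_finite_subcover _ hUopen hcover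
  let η : X →ₙ* (∀ p : {x // x ∈ s}, (F p.1).carrier) :=
    { toFun := fun x p => f p.1 x
      map_mul' := fun x y => by funext p; exact map_mul (f p.1) x y }
  have hη : ∀ x y : X, η x = η y → φ x = φ y := by
    intro x y hxy
    by_contra hne
    have hmem : (x, y) ∈ K := hne
    obtain ⟨i, hi, hU⟩ := Set.mem_iUnion₂.mp (hs' hmem)
    exact hU (congrFun hxy ⟨i, hi⟩)
  have hPmem : V.Mem (∀ p : {x // x ∈ s}, (F p.1).carrier) :=
    V.closed_prod _ _ (fun p => (F p.1).mem)
  have hRmem : V.Mem ↥η.srange :=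
    V.closed_sub _ _ (MulMemClass.subtype η.srange) hPmem Subtype.coe_injective
  have hsecex : ∀ z : ↥η.srange, ∃ x : X, η x = ↑z := fun z => MulHom.mem_srange.mp z.2
  choose sec hsec using hsecex
  let ρ : ↥η.srange →ₙ* T :=
    { toFun := fun z => φ (sec z)
      map_mul' := by
        intro z w
        have hzw : η (sec (z * w)) = η (sec z * sec w) := by
          rw [hsec (z * w), map_mul, hsec z, hsec w]
          rfl
        show φ (sec (z * w)) = φ (sec z) * φ (sec w)
        rw [← map_mul φ]
        exact hη _ _ hzw }
  have hρs : Function.Surjective ⇑ρ := by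
    intro t
    obtain ⟨x, hx⟩ := hs t
    refine ⟨⟨η x, MulHom.mem_srange.mpr ⟨x, rfl⟩⟩, ?_⟩
    have hh := hsec ⟨η x, MulHom.mem_srange.mpr ⟨x, rfl⟩⟩
    exact (hη _ _ hh).trans hx
  exact V.closed_hom _ _ ρ hRmem hρs

end ProV

/-- If `V` is closed under two-sided Karnofsky–Rhodes expansion, every
`V`-projective semigroup is a KR-cover. -/
theorem projective_isKRCover (V : Pseudovariety) (hV : ClosedUnderKR V)
    (S : TopSgr) (hS : IsVProjective V S) :
    IsKRCover S := by
  intro T _ _ hex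
  refine ⟨hex, ?_⟩
  intro φ hφc hφs
  have hTV : V.Mem T := mem_of_finite_image V S hS.1 T φ hφc hφs
  let ψ : FreeSemigroup T →ₙ* T := FreeSemigroup.lift id
  have hψs : Function.Surjective ⇑ψ := fun t => ⟨FreeSemigroup.of t, FreeSemigroup.lift_of id t⟩
  let E : KRExp ψ := krExp ψ
  have hKV : V.Mem E.K := hV T T hTV ψ hψs E
  have hπs : Function.Surjective ⇑E.π := by
    intro t
    obtain ⟨u, hu⟩ := hψs t
    exact ⟨E.ψKR u, (DFunLike.congr_fun E.proj u).trans hu⟩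
  obtain ⟨f', hf'c, hf'⟩ := hS.2 (discTopSgr T) (discTopSgr E.K)
    (isProV_disc V T hTV) (isProV_disc V E.K hKV) φ E.π hφc continuous_bot hπs
  exact ⟨{ A := T, ψ := ψ, surjψ := hψs, E := E }, f', hf'c, hf'⟩
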